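/- With notation as in the Lie algebra k_M = C^∞(M,k) acting on distributions on M, define the first-order operator V(β) = Σ_i β^i ∘ L(e_i) on distributions (where β = Σ_i β^i e_i, (e_i) a basis of k, and L(e_i) the Lie derivative for the k-action). Define τ: k_M → C^∞(M) by τ(β) = Σ_i L_i(β^i). Then L(X^β) − V(β) = τ(β) (as operators, τ(β) acting by multiplication), τ is a 1-cocycle: τ([β,γ]) = L(X^β)τ(γ) − L(X^γ)τ(β), and consequently V([β,γ]) = [V(β), V(γ)]. -/

import Mathlib

attribute [local instance] LieRing.ofAssociativeRing

/-- Algebraic model of the cocycle `τ`.  `A = C^∞(M)` is the algebra of functions, the Lie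
algebra `k` acts on `M` via derivations `a : k → Der(A)`, and `Dst` is the space of
distributions on `M`: an `A`-module with Lie derivatives `L : k → End(Dst)` (a Lie algebra
action) satisfying the Leibniz rule.  For `β = Σ_i β^i e_i ∈ C^∞(M,k)` (coordinates
`β : ι → A` w.r.t. a basis `b` of `k`), set `V(β)u = Σ_i β^i • L_i u`,
`L(X^β)u = Σ_i L_i (β^i • u)`, and `τ(β) = Σ_i L_i β^i ∈ A`.  Then:
(1) `L(X^β) − V(β) = τ(β)` (multiplication operator);
(2) `τ` is a 1-cocycle: `τ([β,γ]) = L(X^β)τ(γ) − L(X^γ)τ(β)`;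
(3) `V([β,γ]) = [V(β),V(γ)]`,
where `[β,γ]` is the modified bracket (written in coordinates). -/
theorem stmt9 {A : Type*} [CommRing A] [Algebra ℝ A]
    {k : Type*} [LieRing k] [LieAlgebra ℝ k]
    {ι : Type*} [Fintype ι] [DecidableEq ι]
    (b : Module.Basis ι ℝ k)
    (a : k →ₗ⁅ℝ⁆ Derivation ℝ A A)
    {Dst : Type*} [AddCommGroup Dst] [Module ℝ Dst] [Module A Dst]
    [IsScalarTower ℝ A Dst]
    (L : k →ₗ⁅ℝ⁆ Module.End ℝ Dst)
    (hLeib : ∀ (ξ : k) (f : A) (u : Dst), L ξ (f • u) = (a ξ f) • u + f • L ξ u)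
    (β γ : ι → A)
    -- the modified bracket `[β,γ]`, in coordinates:
    (brc : ι → A)
    (hbrc : ∀ j, brc j = (∑ i, β i * (a (b i)) (γ j)) - (∑ i, γ i * (a (b i)) (β j))
        + ∑ i, ∑ i', β i * γ i' * algebraMap ℝ A (b.repr ⁅b i, b i'⁆ j)) :
    (∀ u : Dst, (∑ i, L (b i) (β i • u)) - (∑ i, β i • L (b i) u)
        = (∑ i, a (b i) (β i)) • u) ∧
    ((∑ j, a (b j) (brc j))
        = (∑ i, β i * a (b i) (∑ j, a (b j) (γ j)))
          - (∑ i, γ i * a (b i) (∑ j, a (b j) (β j)))) ∧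
    (∀ u : Dst, (∑ i, brc i • L (b i) u)
        = (∑ i, β i • L (b i) (∑ i', γ i' • L (b i') u))
          - (∑ i, γ i • L (b i) (∑ i', β i' • L (b i') u))) := by
  refine ⟨?_, ?_, ?_⟩
  · intro u
    simp only [hLeib]
    rw [Finset.sum_add_distrib, Finset.sum_smul]
    abel
  ·
    have hexp : ∀ (ξ : k) (f : A), a ξ f = ∑ j, (b.repr ξ j) • a (b j) f := by
      intro ξ f
      conv_lhs => rw [← b.sum_repr ξ, show a = ⇑a.toLinearMap from rfl, map_sum]
      induction (Finset.univ : Finset ι) using Finset.induction with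
      | empty => simp
      | insert _ _ h ih =>
          rw [Finset.sum_insert h, Finset.sum_insert h, Derivation.add_apply, ih]
          simp [Derivation.smul_apply]
    have hcomm : ∀ (i i' : ι) (f : A), a (b i) (a (b i') f)
        = a (b i') (a (b i) f) + ∑ j, (b.repr ⁅b i, b i'⁆ j) • a (b j) f := by
      intro i i' f
      have h := hexp ⁅b i, b i'⁆ f
      rw [LieHom.map_lie, Derivation.commutator_apply] at h
      rw [← h]; ring
    have skew : ∀ (i j j' : ι), (b.repr ⁅b j, b i⁆ j') = -(b.repr ⁅b i, b j⁆ j') := by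
      intro i j j'; rw [← lie_skew (b i) (b j), map_neg]; simp
    have rot : ∀ (F : ι → ι → ι → A), (∑ x, ∑ y, ∑ z, F x y z) = ∑ z, ∑ y, ∑ x, F x y z := by
      intro F
      calc ∑ x, ∑ y, ∑ z, F x y z = ∑ y, ∑ x, ∑ z, F x y z := Finset.sum_comm
        _ = ∑ y, ∑ z, ∑ x, F x y z := Finset.sum_congr rfl fun y _ => Finset.sum_comm
        _ = ∑ z, ∑ y, ∑ x, F x y z := Finset.sum_comm
    have key : ∀ f g : ι → A, (∑ j, ∑ i, f i * a (b j) ((a (b i)) (g j)))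
        = (∑ j, ∑ i, f j * a (b j) ((a (b i)) (g i)))
          - ∑ j, ∑ i, ∑ i', (b.repr ⁅b i, b i'⁆ j) • (f i * a (b j) (g i')) := by
      intro f g
      calc ∑ j, ∑ i, f i * a (b j) ((a (b i)) (g j))
          = ∑ j, ∑ i, (f i * a (b i) ((a (b j)) (g j))
              + ∑ j', (b.repr ⁅b j, b i⁆ j') • (f i * a (b j') (g j))) := by
            refine Finset.sum_congr rfl fun j _ => Finset.sum_congr rfl fun i _ => ?_
            rw [hcomm j i (g j), mul_add, Finset.mul_sum]
            exact congrArg _ (Finset.sum_congr rfl fun j' _ => mul_smul_comm _ _ _)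
        _ = (∑ j, ∑ i, f i * a (b i) ((a (b j)) (g j)))
              + ∑ j, ∑ i, ∑ j', (b.repr ⁅b j, b i⁆ j') • (f i * a (b j') (g j)) := by
            simp only [Finset.sum_add_distrib]
        _ = (∑ j, ∑ i, f j * a (b j) ((a (b i)) (g i)))
              - ∑ j, ∑ i, ∑ i', (b.repr ⁅b i, b i'⁆ j) • (f i * a (b j) (g i')) := by
            rw [sub_eq_add_neg]
            congr 1
            · exact Finset.sum_comm
            · conv_rhs => rw [rot (F := fun x y z => (b.repr ⁅b y, b z⁆ x) • (f y * a (b x) (g z)))]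
              rw [← Finset.sum_neg_distrib]
              refine Finset.sum_congr rfl fun j _ => ?_
              rw [← Finset.sum_neg_distrib]
              refine Finset.sum_congr rfl fun i _ => ?_
              rw [← Finset.sum_neg_distrib]
              refine Finset.sum_congr rfl fun j' _ => ?_
              rw [skew, neg_smul]
    have halg : ∀ (x y : A) (r : ℝ), x * y * algebraMap ℝ A r = r • (x * y) := by
      intro x y r; rw [Algebra.smul_def]; ring
    have cross : (∑ j, ∑ i, (a (b i)) (γ j) * (a (b j)) (β i))
        = ∑ j, ∑ i, (a (b i)) (β j) * (a (b j)) (γ i) := by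
      rw [Finset.sum_comm]
      exact Finset.sum_congr rfl fun j _ => Finset.sum_congr rfl fun i _ => mul_comm _ _
    simp only [hbrc, map_sub, map_add, map_sum, halg, Derivation.map_smul, Derivation.leibniz,
      smul_eq_mul, smul_add, Finset.mul_sum, Finset.sum_add_distrib, Finset.sum_sub_distrib]
    rw [key β γ, key γ β, cross]
    have last : (∑ x, ∑ x1, ∑ x2, (b.repr ⁅b x1, b x2⁆ x) • (γ x2 * a (b x) (β x1)))
        = - ∑ j, ∑ i, ∑ i', (b.repr ⁅b i, b i'⁆ j) • (γ i * a (b j) (β i')) := by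
      rw [← Finset.sum_neg_distrib]
      refine Finset.sum_congr rfl fun x _ => ?_
      rw [Finset.sum_comm, ← Finset.sum_neg_distrib]
      refine Finset.sum_congr rfl fun i _ => ?_
      rw [← Finset.sum_neg_distrib]
      refine Finset.sum_congr rfl fun i' _ => ?_
      rw [skew, neg_smul]
    rw [last]
    abel
  ·
    intro u
    have hLexp : ∀ (ξ : k) (v : Dst), L ξ v = ∑ j, (b.repr ξ j) • L (b j) v := by
      intro ξ v
      conv_lhs => rw [← b.sum_repr ξ, show L = ⇑L.toLinearMap from rfl, map_sum]
      simp [LinearMap.sum_apply]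
    have hLcomm : ∀ (i i' : ι) (v : Dst), L (b i) (L (b i') v)
        = L (b i') (L (b i) v) + ∑ j, (b.repr ⁅b i, b i'⁆ j) • L (b j) v := by
      intro i i' v
      have h := hLexp ⁅b i, b i'⁆ v
      rw [LieHom.map_lie, Ring.lie_def, LinearMap.sub_apply, Module.End.mul_apply,
        Module.End.mul_apply] at h
      rw [← h]; abel
    have hsc : ∀ (r : ℝ) (x : A) (v : Dst), x • (r • v) = r • (x • v) := by
      intro r x v
      rw [← algebraMap_smul A r v, smul_smul, ← algebraMap_smul A r (x • v), smul_smul, mul_comm]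
    have halg : ∀ (x y : A) (r : ℝ), x * y * algebraMap ℝ A r = r • (x * y) := by
      intro x y r; rw [Algebra.smul_def]; ring
    have hR : ∀ (g : ι → A) (i : ι), L (b i) (∑ i', g i' • L (b i') u)
        = ∑ i', ((a (b i) (g i')) • L (b i') u + g i' • L (b i) (L (b i') u)) := by
      intro g i
      rw [map_sum]
      exact Finset.sum_congr rfl fun i' _ => hLeib _ _ _
    simp only [hbrc, sub_smul, add_smul, Finset.sum_smul, halg, smul_assoc, hR, smul_add,
      Finset.smul_sum, Finset.sum_add_distrib, Finset.sum_sub_distrib, smul_smul]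
    have rot : ∀ (F : ι → ι → ι → Dst), (∑ x, ∑ y, ∑ z, F x y z) = ∑ z, ∑ y, ∑ x, F x y z := by
      intro F
      calc ∑ x, ∑ y, ∑ z, F x y z = ∑ y, ∑ x, ∑ z, F x y z := Finset.sum_comm
        _ = ∑ y, ∑ z, ∑ x, F x y z := Finset.sum_congr rfl fun y _ => Finset.sum_comm
        _ = ∑ z, ∑ y, ∑ x, F x y z := Finset.sum_comm
    have hfo : ∀ (f g : ι → A), (∑ x, ∑ x1, (f x * a (b x) (g x1)) • L (b x1) u)
        = ∑ x, ∑ i, (f i * a (b i) (g x)) • L (b x) u := fun f g => Finset.sum_comm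
    have key3 : (∑ x, ∑ x1, (β x * γ x1) • L (b x) (L (b x1) u))
        = (∑ x, ∑ x1, (γ x * β x1) • L (b x) (L (b x1) u))
          + ∑ x, ∑ x1, ∑ x2, (b.repr ⁅b x1, b x2⁆ x) • (β x1 * γ x2) • L (b x) u := by
      calc (∑ x, ∑ x1, (β x * γ x1) • L (b x) (L (b x1) u))
          = ∑ x, ∑ x1, ((β x * γ x1) • L (b x1) (L (b x) u)
              + ∑ j, (b.repr ⁅b x, b x1⁆ j) • (β x * γ x1) • L (b j) u) := by
            refine Finset.sum_congr rfl fun x _ => Finset.sum_congr rfl fun x1 _ => ?_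
            rw [hLcomm x x1 u, smul_add, Finset.smul_sum]
            exact congrArg _ (Finset.sum_congr rfl fun j _ => hsc _ _ _)
        _ = (∑ x, ∑ x1, (β x * γ x1) • L (b x1) (L (b x) u))
              + ∑ x, ∑ x1, ∑ j, (b.repr ⁅b x, b x1⁆ j) • (β x * γ x1) • L (b j) u := by
            simp only [Finset.sum_add_distrib]
        _ = (∑ x, ∑ x1, (γ x * β x1) • L (b x) (L (b x1) u))
              + ∑ x, ∑ x1, ∑ x2, (b.repr ⁅b x1, b x2⁆ x) • (β x1 * γ x2) • L (b x) u := by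
            congr 1
            · rw [Finset.sum_comm]
              exact Finset.sum_congr rfl fun x _ => Finset.sum_congr rfl fun x1 _ => by
                rw [mul_comm]
            · rw [rot (F := fun x y z => (b.repr ⁅b x, b y⁆ z) • (β x * γ y) • L (b z) u)]
              exact Finset.sum_congr rfl fun z _ => Finset.sum_comm
    rw [key3, hfo β γ, hfo γ β]
    abel
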